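/- Let X = {x_1,...,x_n} ⊂ ℝ² and let s* be the unique minimiser of P(s) = Σ_i ‖s - x_i‖² + max_i ‖s - x_i‖². Then s* lies in the convex hull of the 2-centroids {M_1,...,M_n}, where M_j = (1/(n+1))(x_j + Σ_i x_i). -/

import Mathlib

/-- The quadratic min-power centre `s*` lies in the convex hull of the 2-centroids. -/
theorem minPower_centre_mem_convexHull_two_centroids
    {n : ℕ} [NeZero n] (x : Fin n → EuclideanSpace ℝ (Fin 2))
    (P : EuclideanSpace ℝ (Fin 2) → ℝ)
    (hP : ∀ s, P s = (∑ i, ‖s - x i‖ ^ 2) +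
      Finset.univ.sup' Finset.univ_nonempty (fun i => ‖s - x i‖ ^ 2))
    (Mc : Fin n → EuclideanSpace ℝ (Fin 2))
    (hMc : ∀ j, Mc j = ((n : ℝ) + 1)⁻¹ • (x j + ∑ i, x i))
    (s : EuclideanSpace ℝ (Fin 2)) (hs : ∀ t, P s ≤ P t) :
    s ∈ convexHull ℝ (Set.range Mc) := by
  by_contra hsK
  have hKconv : Convex ℝ (convexHull ℝ (Set.range Mc)) := convex_convexHull ℝ _
  have hKne : (convexHull ℝ (Set.range Mc)).Nonempty :=
    (Set.range_nonempty Mc).mono (subset_convexHull ℝ _)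
  have hKcomp : IsComplete (convexHull ℝ (Set.range Mc)) :=
    ((Set.finite_range Mc).isCompact_convexHull ℝ).isClosed.isComplete
  obtain ⟨p, hpK, hp⟩ := exists_norm_eq_iInf_of_complete_convex hKne hKcomp hKconv s
  have hproj := (norm_eq_iInf_iff_real_inner_le_zero hKconv hpK).mp hp
  have hsp : s ≠ p := fun h => hsK (h ▸ hpK)
  have hspne : s - p ≠ 0 := sub_ne_zero.mpr hsp
  have hpos : 0 < ‖s - p‖ ^ 2 := pow_pos (norm_pos_iff.mpr hspne) 2
  have hn : ((n : ℝ) + 1) ≠ 0 := by positivity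
  have hterm : ∀ y : EuclideanSpace ℝ (Fin 2),
      ‖s - y‖ ^ 2 = ‖s - p‖ ^ 2 + 2 * (inner ℝ (s - p) (p - y) : ℝ) + ‖p - y‖ ^ 2 := by
    intro y
    have h : s - y = (s - p) + (p - y) := by abel
    rw [h, norm_add_sq_real]
  have hsum : ∑ i, ‖s - x i‖ ^ 2 =
      (n : ℝ) * ‖s - p‖ ^ 2 + 2 * (∑ i, (inner ℝ (s - p) (p - x i) : ℝ))
        + ∑ i, ‖p - x i‖ ^ 2 := by
    rw [Finset.sum_congr rfl (fun i _ => hterm (x i)), Finset.sum_add_distrib, Finset.sum_add_distrib, Finset.sum_const,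
      Finset.card_univ, Fintype.card_fin, nsmul_eq_mul, Finset.mul_sum]
  -- per-index inequality
  have hQ : ∀ j, (∑ i, ‖p - x i‖ ^ 2) + ‖p - x j‖ ^ 2 + ((n : ℝ) + 1) * ‖s - p‖ ^ 2
      ≤ (∑ i, ‖s - x i‖ ^ 2) + ‖s - x j‖ ^ 2 := by
    intro j
    have hvec : (∑ i, (p - x i)) + (p - x j) = ((n : ℝ) + 1) • (p - Mc j) := by
      rw [hMc, smul_sub, smul_inv_smul₀ hn, Finset.sum_sub_distrib, Finset.sum_const,
        Finset.card_univ, Fintype.card_fin, add_smul, one_smul, Nat.cast_smul_eq_nsmul]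
      abel
    have hinner : (∑ i, (inner ℝ (s - p) (p - x i) : ℝ)) + (inner ℝ (s - p) (p - x j) : ℝ)
        = ((n : ℝ) + 1) * (inner ℝ (s - p) (p - Mc j) : ℝ) := by
      rw [← inner_sum, ← inner_add_right, hvec, real_inner_smul_right]
    have hip : (0 : ℝ) ≤ inner ℝ (s - p) (p - Mc j) := by
      have h1 : (inner ℝ (s - p) (Mc j - p) : ℝ) ≤ 0 :=
        hproj (Mc j) (subset_convexHull ℝ _ (Set.mem_range_self j))
      have h2 : p - Mc j = -(Mc j - p) := by abel
      rw [h2, inner_neg_right]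
      linarith
    have hj := hterm (x j)
    have hmul : 0 ≤ ((n : ℝ) + 1) * (inner ℝ (s - p) (p - Mc j) : ℝ) :=
      mul_nonneg (by positivity) hip
    nlinarith [hsum, hinner]
  -- pick the index attaining the sup at p
  obtain ⟨j0, _, hj0⟩ := Finset.exists_mem_eq_sup' Finset.univ_nonempty
    (fun i => ‖p - x i‖ ^ 2)
  have h1 : P p = (∑ i, ‖p - x i‖ ^ 2) + ‖p - x j0‖ ^ 2 := by
    rw [hP, hj0]
  have h2 : (∑ i, ‖s - x i‖ ^ 2) + ‖s - x j0‖ ^ 2 ≤ P s := by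
    rw [hP]
    exact add_le_add_right (Finset.le_sup' (fun i => ‖s - x i‖ ^ 2) (Finset.mem_univ j0)) _
  have h3 := hQ j0
  have h4 := hs p
  have h5 : 0 < ((n : ℝ) + 1) * ‖s - p‖ ^ 2 := mul_pos (by positivity) hpos
  linarith
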